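/- Let τ > 0 and define the DOC kernels by ϑ_0 = 6τ/11, ϑ_1 = 42τ/121, and the recursion 11*ϑ_m - 7*ϑ_{m-1} + 2*ϑ_{m-2} = 0 for m ≥ 2. Then for all m ≥ 0, ϑ_m = (6τ/11) * [ ((39 + 7√39 i)/78) * ((7 - √39 i)/22)^m + ((39 - 7√39 i)/78) * ((7 + √39 i)/22)^m ], where i is the imaginary unit. -/

import Mathlib

theorem doc_kernel_explicit_formula (τ : ℝ) (hτ : 0 < τ) (ϑ : ℕ → ℝ)
    (h0 : ϑ 0 = 6*τ/11) (h1 : ϑ 1 = 42*τ/121)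
    (hrec : ∀ m, 2 ≤ m → 11*ϑ m - 7*ϑ (m-1) + 2*ϑ (m-2) = 0) :
    ∀ m : ℕ, (ϑ m : ℂ) = (6*τ/11 : ℂ) *
      ( ((39 + 7*Real.sqrt 39*Complex.I)/78) * (((7 : ℂ) - Real.sqrt 39*Complex.I)/22)^m
      + ((39 - 7*Real.sqrt 39*Complex.I)/78) * (((7 : ℂ) + Real.sqrt 39*Complex.I)/22)^m ) := by
  set s : ℂ := ((Real.sqrt 39 : ℝ) : ℂ) with hsdef
  have hs : s * s = 39 := by
    rw [hsdef, ← Complex.ofReal_mul, Real.mul_self_sqrt (by norm_num : (0:ℝ) ≤ 39)]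
    norm_num
  have hI : Complex.I * Complex.I = -1 := Complex.I_mul_I
  set F : ℕ → ℂ := fun m => (6*τ/11 : ℂ) *
      ( ((39 + 7*s*Complex.I)/78) * (((7 : ℂ) - s*Complex.I)/22)^m
      + ((39 - 7*s*Complex.I)/78) * (((7 : ℂ) + s*Complex.I)/22)^m ) with hF
  suffices h : ∀ m : ℕ, (ϑ m : ℂ) = F m ∧ (ϑ (m+1) : ℂ) = F (m+1) by
    intro m; exact (h m).1
  have root : ∀ (n : ℕ) (r c : ℂ), 11*r^2 = 7*r - 2 →
      11*(c*r^(n+2)) = 7*(c*r^(n+1)) - 2*(c*r^n) := by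
    intro n r c h
    linear_combination (c*r^n) * h
  have hr1 : 11*(((7 : ℂ) - s*Complex.I)/22)^2 = 7*(((7 : ℂ) - s*Complex.I)/22) - 2 := by
    field_simp
    linear_combination (11*Complex.I*Complex.I) * hs + 429 * hI
  have hr2 : 11*(((7 : ℂ) + s*Complex.I)/22)^2 = 7*(((7 : ℂ) + s*Complex.I)/22) - 2 := by
    field_simp
    linear_combination (11*Complex.I*Complex.I) * hs + 429 * hI
  intro m
  induction m with
  | zero =>
    constructor
    · rw [h0, hF]
      push_cast
      simp only [pow_zero]
      ring
    · rw [h1, hF]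
      push_cast
      simp only [pow_one]
      field_simp
      linear_combination (10164*(τ:ℂ)*Complex.I*Complex.I) * hs + (399672*(τ:ℂ) - 84*39*(τ:ℂ)) * hI
  | succ n ih =>
    refine ⟨ih.2, ?_⟩
    have hr := hrec (n+2) (by omega)
    simp only [Nat.add_sub_cancel, show n+2-2 = n from rfl] at hr
    have hC : (11:ℂ)*(ϑ (n+2):ℂ) - 7*(ϑ (n+1):ℂ) + 2*(ϑ n:ℂ) = 0 := by
      exact_mod_cast congrArg (fun x : ℝ => (x : ℂ)) hr
    have A := root n (((7 : ℂ) - s*Complex.I)/22) ((6*τ/11 : ℂ)*((39 + 7*s*Complex.I)/78)) hr1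
    have B := root n (((7 : ℂ) + s*Complex.I)/22) ((6*τ/11 : ℂ)*((39 - 7*s*Complex.I)/78)) hr2
    have e1 : 11*F (n+2) = 7*F (n+1) - 2*F n := by
      simp only [hF]
      linear_combination A + B
    linear_combination (1/11:ℂ)*hC + (7/11:ℂ)*ih.2 - (2/11:ℂ)*ih.1 - (1/11:ℂ)*e1
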